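/- arXiv:1706.08154 — 7 statements merged into one kernel-verified Lean document; each statement's English description precedes it below -/
import Mathlib

section
/- Let ℓ be a prime number and a₁, a₂ ∈ ℤ. Suppose the polynomial x⁴ + a₁x³ + a₂x² + ℓa₁x + ℓ² factors over ℂ as (x − λ₁)(x − conj(λ₁))(x − λ₂)(x − conj(λ₂)), where λ₁, λ₂ ∈ ℂ satisfy |λ₁| = |λ₂| = √ℓ. Set sᵢ = (λᵢ + conj(λᵢ))/√ℓ ∈ ℝ for i = 1, 2. If |s₁ − s₂| < 1/√ℓ, then s₁ = s₂. -/
/-- **Sato–Tate rigidity for quartic Weil polynomials.**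
Let `ℓ` be a prime and `a₁ a₂ : ℤ`. Suppose `x⁴ + a₁x³ + a₂x² + ℓa₁x + ℓ²` factors over `ℂ` as
`(x − lam₁)(x − conj lam₁)(x − lam₂)(x − conj lam₂)` with `|lam₁| = |lam₂| = √ℓ`.
Set `sᵢ = (lamᵢ + conj lamᵢ)/√ℓ ∈ ℝ`. If `|s₁ − s₂| < 1/√ℓ` then `s₁ = s₂`. -/
theorem exceptional_splitting_trace_rigidity
    (ℓ : ℕ) (hℓ : ℓ.Prime) (a₁ a₂ : ℤ) (lam₁ lam₂ : ℂ)
    (hfact : ∀ x : ℂ,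
      x ^ 4 + (a₁ : ℂ) * x ^ 3 + (a₂ : ℂ) * x ^ 2 + (ℓ : ℂ) * (a₁ : ℂ) * x + (ℓ : ℂ) ^ 2 =
        (x - lam₁) * (x - (starRingEnd ℂ) lam₁) * (x - lam₂) * (x - (starRingEnd ℂ) lam₂))
    (habs₁ : ‖lam₁‖ = Real.sqrt ℓ)
    (habs₂ : ‖lam₂‖ = Real.sqrt ℓ)
    (s₁ s₂ : ℝ)
    (hs₁ : (s₁ : ℂ) = (lam₁ + (starRingEnd ℂ) lam₁) / (Real.sqrt ℓ : ℝ))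
    (hs₂ : (s₂ : ℂ) = (lam₂ + (starRingEnd ℂ) lam₂) / (Real.sqrt ℓ : ℝ))
    (hclose : |s₁ - s₂| < 1 / Real.sqrt ℓ) :
    s₁ = s₂ := by
  have hℓpos : (0:ℝ) < ℓ := by exact_mod_cast hℓ.pos
  have hsqrtpos : 0 < Real.sqrt ℓ := Real.sqrt_pos.2 hℓpos
  have hsq : Real.sqrt ℓ ^ 2 = (ℓ:ℝ) := Real.sq_sqrt hℓpos.le
  have hsqC : ((Real.sqrt ℓ : ℝ) : ℂ) ^ 2 = (ℓ : ℂ) := by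
    norm_cast
  have hsqrtC : ((Real.sqrt ℓ : ℝ) : ℂ) ≠ 0 := by
    exact_mod_cast hsqrtpos.ne'
  -- products of conjugate roots
  have hm₁ : lam₁ * (starRingEnd ℂ) lam₁ = (ℓ:ℂ) := by
    rw [Complex.mul_conj, Complex.normSq_eq_norm_sq, habs₁]
    exact_mod_cast congrArg (fun r : ℝ => (r : ℂ)) hsq
  have hm₂ : lam₂ * (starRingEnd ℂ) lam₂ = (ℓ:ℂ) := by
    rw [Complex.mul_conj, Complex.normSq_eq_norm_sq, habs₂]
    exact_mod_cast congrArg (fun r : ℝ => (r : ℂ)) hsq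
  -- traces of conjugate pairs
  have hT₁ : lam₁ + (starRingEnd ℂ) lam₁ = ((Real.sqrt ℓ : ℝ) : ℂ) * s₁ := by
    have h := (eq_div_iff hsqrtC).mp hs₁
    linear_combination -h
  have hT₂ : lam₂ + (starRingEnd ℂ) lam₂ = ((Real.sqrt ℓ : ℝ) : ℂ) * s₂ := by
    have h := (eq_div_iff hsqrtC).mp hs₂
    linear_combination -h
  -- rewrite the factorization with quadratic factors
  have hq : ∀ x : ℂ,
      x ^ 4 + (a₁ : ℂ) * x ^ 3 + (a₂ : ℂ) * x ^ 2 + (ℓ : ℂ) * (a₁ : ℂ) * x + (ℓ : ℂ) ^ 2 =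
        (x ^ 2 - ((Real.sqrt ℓ : ℝ) : ℂ) * s₁ * x + ℓ) *
        (x ^ 2 - ((Real.sqrt ℓ : ℝ) : ℂ) * s₂ * x + ℓ) := by
    intro x
    rw [hfact x]
    linear_combination
      ((x - lam₂) * (x - (starRingEnd ℂ) lam₂)) * ((-x) * hT₁ + hm₁) +
      (x ^ 2 - ((Real.sqrt ℓ : ℝ) : ℂ) * s₁ * x + (ℓ:ℂ)) * ((-x) * hT₂ + hm₂)
  have f1 := hq 1
  have f2 := hq (-1)
  -- coefficient identities over ℂ
  have hc2 : (a₂ : ℂ) = 2 * ℓ + (ℓ:ℂ) * s₁ * s₂ := by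
    linear_combination (1/2) * f1 + (1/2) * f2 + ((s₁ : ℂ) * s₂) * hsqC
  have hc1 : (a₁ : ℂ) = -(((Real.sqrt ℓ : ℝ) : ℂ) * (s₁ + s₂)) := by
    have hne : (1 + (ℓ:ℂ)) ≠ 0 := by
      have : ((1 + ℓ : ℕ) : ℂ) ≠ 0 := Nat.cast_ne_zero.2 (by omega)
      push_cast at this
      exact this
    have h : ((a₁ : ℂ) + ((Real.sqrt ℓ : ℝ) : ℂ) * (s₁ + s₂)) * (1 + ℓ) = 0 := by
      linear_combination (1/2) * f1 - (1/2) * f2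
    rcases mul_eq_zero.mp h with h' | h'
    · linear_combination h'
    · exact absurd h' hne
  -- transfer to ℝ
  have hc1R : (a₁ : ℝ) = -(Real.sqrt ℓ * (s₁ + s₂)) := by exact_mod_cast hc1
  have hc2R : (a₂ : ℝ) = 2 * ℓ + (ℓ:ℝ) * s₁ * s₂ := by exact_mod_cast hc2
  -- the integer discriminant
  set n : ℤ := a₁ ^ 2 - 4 * a₂ + 8 * ℓ with hn_def
  have hn : (n : ℝ) = (ℓ:ℝ) * (s₁ - s₂) ^ 2 := by
    push_cast [hn_def]
    rw [hc1R, hc2R]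
    linear_combination ((s₁ + s₂) ^ 2) * hsq
  have hnn : 0 ≤ n := by
    have : (0:ℝ) ≤ (n:ℝ) := by rw [hn]; positivity
    exact_mod_cast this
  have hlt : (n : ℝ) < 1 := by
    have h1 : (s₁ - s₂) ^ 2 < (1 / Real.sqrt ℓ) ^ 2 := by
      have := abs_nonneg (s₁ - s₂)
      calc (s₁ - s₂) ^ 2 = |s₁ - s₂| ^ 2 := (sq_abs _).symm
        _ < (1 / Real.sqrt ℓ) ^ 2 := by
            apply pow_lt_pow_left₀ hclose this
            norm_num
    rw [hn]
    have h2 : (1 / Real.sqrt ℓ) ^ 2 = 1 / (ℓ:ℝ) := by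
      rw [div_pow, one_pow, hsq]
    rw [h2] at h1
    calc (ℓ:ℝ) * (s₁ - s₂) ^ 2 < (ℓ:ℝ) * (1 / ℓ) := by
          exact mul_lt_mul_of_pos_left h1 hℓpos
      _ = 1 := by field_simp
  have hn0 : n = 0 := by
    have : n < 1 := by exact_mod_cast hlt
    omega
  have : (ℓ:ℝ) * (s₁ - s₂) ^ 2 = 0 := by rw [← hn, hn0]; norm_num
  have hsz : (s₁ - s₂) ^ 2 = 0 := by
    rcases mul_eq_zero.mp this with h | h
    · exact absurd h hℓpos.ne'
    · exact h
  have := pow_eq_zero_iff (n := 2) (by norm_num) |>.mp hsz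
  linarith [this]
end

section
/- Let F be a real quadratic field with discriminant D, and let q be a rational prime that is inert in F, i.e., q·O_F is a prime ideal of the ring of integers O_F of F. Then there is no nonzero ideal 𝔟 of O_F whose absolute norm equals q·D. -/
open NumberField Ideal

section

variable (F : Type*) [Field F] [NumberField F]

lemma absNorm_span_natCast (q : ℕ) :
    Ideal.absNorm (Ideal.span {(q : 𝓞 F)} : Ideal (𝓞 F)) =
      q ^ Module.finrank ℤ (𝓞 F) := by
  rw [Ideal.absNorm_span_singleton,
    show ((q : ℕ) : 𝓞 F) = algebraMap ℤ (𝓞 F) (q : ℤ) by simp,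
    Algebra.norm_algebraMap_of_basis (Module.Free.chooseBasis ℤ (𝓞 F)),
    Module.finrank_eq_card_chooseBasisIndex]
  simp [Int.natAbs_pow]

set_option synthInstance.maxHeartbeats 400000 in
set_option maxHeartbeats 1000000 in
lemma not_dvd_discr_of_inert (q : ℕ) (hq : q.Prime)
    (hinert : (Ideal.span {(q : 𝓞 F)} : Ideal (𝓞 F)).IsPrime) :
    ¬ (q : ℤ) ∣ NumberField.discr F := by
  classical
  set S := 𝓞 F
  set p : Ideal ℤ := Ideal.span {(q : ℤ)} with hp_def
  have hqZ : Prime (q : ℤ) := Nat.prime_iff_prime_int.mp hq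
  haveI hp : p.IsMaximal := PrincipalIdealRing.isMaximal_of_irreducible hqZ.irreducible
  set pS : Ideal S := p.map (algebraMap ℤ S) with hpS_def
  have hqS : algebraMap ℤ S (q : ℤ) = (q : S) := by
    push_cast
    rfl
  have hpS : pS = Ideal.span {(q : S)} := by
    rw [hpS_def, hp_def, Ideal.map_span, Set.image_singleton, hqS]
  haveI hpSprime : pS.IsPrime := hpS ▸ hinert
  have hqS0 : (q : S) ≠ 0 := by
    exact_mod_cast hq.ne_zero
  have hpSne : pS ≠ ⊥ := by
    rw [hpS, Ne, Ideal.span_singleton_eq_bot]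
    exact hqS0
  haveI hpSmax : pS.IsMaximal := hpSprime.isMaximal hpSne
  -- residue fields
  letI : Field (ℤ ⧸ p) := Ideal.Quotient.field p
  letI : Field (S ⧸ pS) := Ideal.Quotient.field pS
  haveI : NeZero q := ⟨hq.ne_zero⟩
  haveI : Finite (ℤ ⧸ p) := Finite.of_equiv _ (Int.quotientSpanNatEquivZMod q).symm.toEquiv
  haveI : Finite (S ⧸ pS) := by
    rw [← Ideal.absNorm_ne_zero_iff, hpS, absNorm_span_natCast]
    exact pow_ne_zero _ hq.ne_zero
  -- the reduced basis
  set ι := Module.Free.ChooseBasisIndex ℤ S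
  set b : Module.Basis ι ℤ S := NumberField.RingOfIntegers.basis F with hb
  set v : ι → S ⧸ pS := fun i => Ideal.Quotient.mk pS (b i) with hv
  have hspan : ⊤ ≤ Submodule.span (ℤ ⧸ p) (Set.range v) := by
    rintro x -
    obtain ⟨y, rfl⟩ := Ideal.Quotient.mk_surjective x
    have hy : Ideal.Quotient.mk pS y =
        ∑ i, (Ideal.Quotient.mk p (b.repr y i)) • v i := by
      conv_lhs => rw [← b.sum_repr y]
      rw [map_sum]
      refine Finset.sum_congr rfl fun i _ => ?_
      rw [hv, Ideal.Quotient.mk_smul_mk_quotient_map_quotient, ← Algebra.smul_def]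
    rw [hy]
    exact Submodule.sum_mem _ fun i _ => Submodule.smul_mem _ _
      (Submodule.subset_span (Set.mem_range_self i))
  -- dimension count
  haveI : Fintype (S ⧸ pS) := Fintype.ofFinite _
  haveI : Fintype (ℤ ⧸ p) := Fintype.ofFinite _
  have hcardp : Fintype.card (ℤ ⧸ p) = q := by
    rw [← Nat.card_eq_fintype_card, Nat.card_congr (Int.quotientSpanNatEquivZMod q).toEquiv,
      Nat.card_zmod]
  have hcardS : Fintype.card (S ⧸ pS) = q ^ Fintype.card ι := by
    rw [← Nat.card_eq_fintype_card, ← Submodule.cardQuot_apply, ← Ideal.absNorm_apply, hpS,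
      absNorm_span_natCast, Module.finrank_eq_card_chooseBasisIndex]
  have hrank : Fintype.card ι = Module.finrank (ℤ ⧸ p) (S ⧸ pS) := by
    have := Module.card_eq_pow_finrank (K := ℤ ⧸ p) (V := S ⧸ pS)
    rw [hcardp, hcardS] at this
    exact Nat.pow_right_injective hq.two_le this
  set b' : Module.Basis ι (ℤ ⧸ p) (S ⧸ pS) := basisOfTopLeSpanOfCardEqFinrank v hspan hrank with hb'
  have hb'coe : ⇑b' = v := coe_basisOfTopLeSpanOfCardEqFinrank v hspan hrank
  -- separability
  haveI : Module.Finite (ℤ ⧸ p) (S ⧸ pS) := Module.Finite.of_basis b'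
  haveI : Algebra.IsSeparable (ℤ ⧸ p) (S ⧸ pS) := by
    haveI : Algebra.IsAlgebraic (ℤ ⧸ p) (S ⧸ pS) := Algebra.IsAlgebraic.of_finite _ _
    exact Algebra.IsAlgebraic.isSeparable_of_perfectField
  have hdiscr_ne : Algebra.discr (ℤ ⧸ p) b' ≠ 0 := Algebra.discr_not_zero_of_basis _ _
  -- reduction of the discriminant
  have hred : Ideal.Quotient.mk p (NumberField.discr F) = Algebra.discr (ℤ ⧸ p) b' := by
    rw [show NumberField.discr F = Algebra.discr ℤ b from rfl, Algebra.discr_def,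
      Algebra.discr_def, RingHom.map_det]
    congr 1
    ext i j
    simp only [RingHom.mapMatrix_apply, Matrix.map_apply, Algebra.traceMatrix_apply,
      Algebra.traceForm_apply, hb'coe, hv]
    rw [← _root_.map_mul (Ideal.Quotient.mk pS)]
    have h := Algebra.trace_quotient_eq_of_isDedekindDomain (R := ℤ) (S := S) p (b i * b j)
    rw [Algebra.intTrace_eq_trace] at h
    exact h.symm
  intro hdvd
  apply hdiscr_ne
  rw [← hred, Ideal.Quotient.eq_zero_iff_mem, hp_def, Ideal.mem_span_singleton]
  exact hdvd

end

open NumberField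

set_option synthInstance.maxHeartbeats 400000 in
set_option maxHeartbeats 1000000 in
/-- **No ideal of norm `q·D` in a real quadratic field when `q` is inert.**
Let `F` be a real quadratic field with discriminant `D`, and let `q` be a rational prime
which is inert in `F` (i.e. `q·O_F` is a prime ideal).  Then there is no nonzero ideal of
`O_F` of absolute norm `q·D`. -/
theorem no_ideal_of_norm_qD
    (F : Type*) [Field F] [NumberField F]
    (hdeg : Module.finrank ℚ F = 2)
    (hreal : Nonempty (F →+* ℝ))
    (q : ℕ) (hq : q.Prime)
    (hinert : (Ideal.span {(q : 𝓞 F)} : Ideal (𝓞 F)).IsPrime) :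
    ¬ ∃ 𝔟 : Ideal (𝓞 F), 𝔟 ≠ ⊥ ∧ (Ideal.absNorm 𝔟 : ℤ) = (q : ℤ) * NumberField.discr F := by
  rintro ⟨𝔟, hne, hnorm⟩
  classical
  set S := 𝓞 F
  set P : Ideal S := Ideal.span {(q : S)} with hP
  haveI := Fact.mk hq
  have hq2 : Ideal.absNorm P = q ^ 2 := by
    rw [hP, absNorm_span_natCast, NumberField.RingOfIntegers.rank, hdeg]
  -- q divides the norm of 𝔟
  have hqdvd : q ∣ Ideal.absNorm 𝔟 := by
    rw [← Int.natCast_dvd_natCast, hnorm]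
    exact Dvd.intro _ rfl
  -- the quotient is finite
  have habs0 : Ideal.absNorm 𝔟 ≠ 0 := by
    rw [Ne, Ideal.absNorm_eq_zero_iff]
    exact hne
  haveI hfin : Finite (S ⧸ 𝔟) := (Ideal.absNorm_ne_zero_iff 𝔟).mp habs0
  haveI : Fintype (S ⧸ 𝔟) := Fintype.ofFinite _
  have hcard : q ∣ Fintype.card (S ⧸ 𝔟) := by
    rwa [← Nat.card_eq_fintype_card, ← Submodule.cardQuot_apply, ← Ideal.absNorm_apply]
  obtain ⟨x, hx⟩ := exists_prime_addOrderOf_dvd_card q hcard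
  have hxne : x ≠ 0 := by
    intro h
    rw [h, addOrderOf_zero] at hx
    exact hq.ne_one hx.symm
  have hqx : (q : S ⧸ 𝔟) * x = 0 := by
    rw [← nsmul_eq_mul, ← hx, addOrderOf_nsmul_eq_zero]
  -- 𝔟 ⊔ P ≠ ⊤
  have hne_top : 𝔟 ⊔ P ≠ ⊤ := by
    intro htop
    rw [Ideal.eq_top_iff_one] at htop
    obtain ⟨a, ha, c, hc, habc⟩ := Submodule.mem_sup.mp htop
    obtain ⟨z, hz⟩ := Ideal.mem_span_singleton'.mp hc
    apply hxne
    have h1 : (1 : S ⧸ 𝔟) = Ideal.Quotient.mk 𝔟 z * q := by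
      have h2 := congrArg (Ideal.Quotient.mk 𝔟) habc
      rw [map_add, Ideal.Quotient.eq_zero_iff_mem.mpr ha, zero_add, ← hz, _root_.map_mul,
        map_one] at h2
      rw [← h2]
      norm_cast
    calc x = 1 * x := (one_mul x).symm
      _ = Ideal.Quotient.mk 𝔟 z * ((q : S ⧸ 𝔟) * x) := by rw [h1]; ring
      _ = 0 := by rw [hqx, mul_zero]
  obtain ⟨M, hMmax, hM⟩ := Ideal.exists_le_maximal _ hne_top
  have hPne : P ≠ ⊥ := by
    rw [hP, Ne, Ideal.span_singleton_eq_bot]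
    exact_mod_cast hq.ne_zero
  haveI hPmax : P.IsMaximal := hinert.isMaximal hPne
  have hPM : P = M := hPmax.eq_of_le hMmax.ne_top (le_sup_right.trans hM)
  have hle : 𝔟 ≤ P := hPM ▸ (le_sup_left.trans hM)
  obtain ⟨C, rfl⟩ := (Ideal.dvd_iff_le).mpr hle
  rw [_root_.map_mul, hq2] at hnorm
  have hD : (NumberField.discr F : ℤ) = q * Ideal.absNorm C := by
    have hq0 : (q : ℤ) ≠ 0 := by exact_mod_cast hq.ne_zero
    apply mul_left_cancel₀ hq0
    rw [← hnorm]
    push_cast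
    ring
  exact not_dvd_discr_of_inert F q hq hinert ⟨_, hD⟩
end

section
/- Let C₀ ≥ 1 and λ > 0 be real numbers, and let u = (u₁₁, u₁₂; u₂₁, u₂₂) be a real 2×2 matrix with determinant λ. Let z ∈ ℂ with Im z > 0, |Re z| ≤ C₀ and C₀⁻¹ ≤ Im z ≤ C₀, and suppose u₂₁z + u₂₂ ≠ 0 and the point w = (u₁₁z + u₁₂)/(u₂₁z + u₂₂) satisfies |Re w| ≤ C₀ and C₀⁻¹ ≤ Im w ≤ C₀. Then |u₁₁|, |u₁₂|, |u₂₁|, |u₂₂| are all at most 4C₀⁴√λ. -/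
open Complex

lemma abs_le_of_sq_le_sq_aux (e M : ℝ) (hM : 0 ≤ M) (h : e ^ 2 ≤ M ^ 2) : |e| ≤ M := by
  have := Real.sqrt_le_sqrt h
  rwa [Real.sqrt_sq_eq_abs, Real.sqrt_sq hM] at this

set_option maxHeartbeats 1600000 in
/-- **Entry bounds for a Möbius transformation preserving a compact box of `ℍ`.**
Let `C₀ ≥ 1`, `lam > 0`, and let `u` be a real `2×2` matrix of determinant `lam`.  If
`z ∈ ℍ` lies in the box `|Re z| ≤ C₀`, `C₀⁻¹ ≤ Im z ≤ C₀` and its image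
`w = (u₁₁z + u₁₂)/(u₂₁z + u₂₂)` lies in the same box, then all entries of `u` are
bounded by `4C₀⁴√lam`. -/
theorem mobius_entry_bound
    (C₀ lam : ℝ) (hC₀ : 1 ≤ C₀) (hlam : 0 < lam)
    (u : Matrix (Fin 2) (Fin 2) ℝ) (hdet : u.det = lam)
    (z : ℂ) (hz_im : 0 < z.im)
    (hz_re : |z.re| ≤ C₀) (hz_lb : C₀⁻¹ ≤ z.im) (hz_ub : z.im ≤ C₀)
    (hden : (u 1 0 : ℂ) * z + (u 1 1 : ℂ) ≠ 0)
    (w : ℂ)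
    (hw : w = ((u 0 0 : ℂ) * z + (u 0 1 : ℂ)) / ((u 1 0 : ℂ) * z + (u 1 1 : ℂ)))
    (hw_re : |w.re| ≤ C₀) (hw_lb : C₀⁻¹ ≤ w.im) (hw_ub : w.im ≤ C₀) :
    ∀ i j : Fin 2, |u i j| ≤ 4 * C₀ ^ 4 * Real.sqrt lam := by
  set a := u 0 0 with ha
  set b := u 0 1 with hb
  set c := u 1 0 with hc
  set d := u 1 1 with hd
  set x := z.re with hx
  set y := z.im with hy
  set p := w.re with hp
  set q := w.im with hq
  suffices H : |a| ≤ 4 * C₀ ^ 4 * Real.sqrt lam ∧ |b| ≤ 4 * C₀ ^ 4 * Real.sqrt lam ∧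
      |c| ≤ 4 * C₀ ^ 4 * Real.sqrt lam ∧ |d| ≤ 4 * C₀ ^ 4 * Real.sqrt lam by
    intro i j
    fin_cases i <;> fin_cases j
    · exact H.1
    · exact H.2.1
    · exact H.2.2.1
    · exact H.2.2.2
  have hC₀0 : (0:ℝ) < C₀ := lt_of_lt_of_le one_pos hC₀
  have hinv : C₀ * C₀⁻¹ = 1 := mul_inv_cancel₀ hC₀0.ne'
  have h1y : 1 ≤ y * C₀ := by
    calc (1:ℝ) = C₀ * C₀⁻¹ := hinv.symm
    _ ≤ C₀ * y := by nlinarith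
    _ = y * C₀ := by ring
  have h1q : 1 ≤ q * C₀ := by
    calc (1:ℝ) = C₀ * C₀⁻¹ := hinv.symm
    _ ≤ C₀ * q := by nlinarith
    _ = q * C₀ := by ring
  have hq0 : 0 < q := by
    have := inv_pos.mpr hC₀0; linarith
  have hdet' : a * d - b * c = lam := by
    rw [Matrix.det_fin_two] at hdet; linarith [hdet]
  have hw' : ((a : ℝ):ℂ)*z + (b:ℝ) = w * (((c:ℝ):ℂ)*z + (d:ℝ)) := by
    rw [hw, div_mul_cancel₀ _ hden]
  rw [Complex.ext_iff] at hw'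
  obtain ⟨h1, h2⟩ := hw'
  simp only [Complex.add_re, Complex.add_im, Complex.mul_re, Complex.mul_im,
    Complex.ofReal_re, Complex.ofReal_im, zero_mul, mul_zero, sub_zero, add_zero,
    zero_add, ← hx, ← hy, ← hp, ← hq] at h1 h2
  -- h1 : a * x + b = p * (c*x+d) - q*(c*y)
  -- h2 : a * y = p * (c*y) + q*(c*x+d)
  have hNeq : Complex.normSq ((c:ℂ)*z+(d:ℝ)) = (c*x+d)^2 + (c*y)^2 := by
    simp only [Complex.normSq_apply, Complex.add_re, Complex.add_im, Complex.mul_re,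
      Complex.mul_im, Complex.ofReal_re, Complex.ofReal_im, zero_mul, mul_zero,
      sub_zero, add_zero, zero_add, ← hx, ← hy]
    ring
  have hNpos : 0 < (c*x+d)^2 + (c*y)^2 := hNeq ▸ Complex.normSq_pos.mpr hden
  clear_value a b c d x y p q
  clear hw hdet hden ha hb hc hd hx hy hp hq hNeq z w u
  have hN : q * ((c*x+d)^2 + (c*y)^2) = lam * y := by
    linear_combination (-(c*x+d))*h2 + (c*y)*h1 + y*hdet'
  have hNle : (c*x+d)^2 + (c*y)^2 ≤ lam * C₀^2 := by
    have e1 : (c*x+d)^2 + (c*y)^2 ≤ ((c*x+d)^2 + (c*y)^2) * (q*C₀) :=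
      le_mul_of_one_le_right hNpos.le h1q
    have e2 : ((c*x+d)^2 + (c*y)^2) * (q*C₀) = (lam*y)*C₀ := by linear_combination C₀*hN
    have e3 : (lam*y)*C₀ ≤ lam*C₀^2 := by nlinarith
    linarith
  have hx2 : x^2 ≤ C₀^2 := by
    calc x^2 = |x|^2 := (_root_.sq_abs x).symm
    _ ≤ C₀^2 := pow_le_pow_left₀ (abs_nonneg x) hz_re 2
  have hp2 : p^2 ≤ C₀^2 := by
    calc p^2 = |p|^2 := (_root_.sq_abs p).symm
    _ ≤ C₀^2 := pow_le_pow_left₀ (abs_nonneg p) hw_re 2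
  have hq2 : q^2 ≤ C₀^2 := pow_le_pow_left₀ hq0.le hw_ub 2
  have hC2 : C₀^2 ≤ C₀^8 := pow_le_pow_right₀ hC₀ (by norm_num)
  have hC4 : C₀^4 ≤ C₀^8 := pow_le_pow_right₀ hC₀ (by norm_num)
  have hC6 : C₀^6 ≤ C₀^8 := pow_le_pow_right₀ hC₀ (by norm_num)
  -- bound on c
  have hcy : c^2*y^2 ≤ lam*C₀^2 := by nlinarith [sq_nonneg (c*x+d)]
  have hc2 : c^2 ≤ lam * C₀^4 := by
    have k1 : 0 ≤ c^2 * ((y*C₀)^2 - 1) := mul_nonneg (sq_nonneg c) (by nlinarith)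
    have k2 : c^2*y^2*C₀^2 ≤ lam*C₀^2*C₀^2 :=
      mul_le_mul_of_nonneg_right hcy (sq_nonneg C₀)
    nlinarith
  have hc2' : c^2 ≤ 16 * C₀^8 * lam := by nlinarith [mul_nonneg hlam.le (sub_nonneg.mpr hC4)]
  -- bound on d
  have hcxd : (c*x+d)^2 ≤ lam*C₀^2 := by nlinarith [sq_nonneg (c*y)]
  have hcx : c^2*x^2 ≤ (lam*C₀^4)*C₀^2 := mul_le_mul hc2 hx2 (sq_nonneg x) (by positivity)
  have hd2 : d^2 ≤ 16 * C₀^8 * lam := by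
    nlinarith [sq_nonneg ((c*x+d)+c*x), mul_nonneg hlam.le (sub_nonneg.mpr hC6),
      mul_nonneg hlam.le (sub_nonneg.mpr hC2)]
  -- bound on a, b
  have hSum : (a*x+b)^2 + (a*y)^2 = (p^2+q^2) * ((c*x+d)^2 + (c*y)^2) := by
    linear_combination (a*x+b + (p*(c*x+d) - q*(c*y)))*h1 + (a*y + (p*(c*y)+q*(c*x+d)))*h2
  have hS2 : (a*x+b)^2 + (a*y)^2 ≤ 2*lam*C₀^4 := by
    have k1 : (p^2+q^2) * ((c*x+d)^2 + (c*y)^2) ≤ (2*C₀^2) * (lam*C₀^2) :=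
      mul_le_mul (by linarith) hNle hNpos.le (by positivity)
    nlinarith
  have hay : a^2*y^2 ≤ 2*lam*C₀^4 := by nlinarith [sq_nonneg (a*x+b)]
  have ha2 : a^2 ≤ 2*lam*C₀^6 := by
    have k1 : 0 ≤ a^2 * ((y*C₀)^2 - 1) := mul_nonneg (sq_nonneg a) (by nlinarith)
    have k2 : a^2*y^2*C₀^2 ≤ 2*lam*C₀^4*C₀^2 :=
      mul_le_mul_of_nonneg_right hay (sq_nonneg C₀)
    nlinarith
  have ha2' : a^2 ≤ 16 * C₀^8 * lam := by
    nlinarith [mul_nonneg hlam.le (sub_nonneg.mpr hC6)]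
  have haxb : (a*x+b)^2 ≤ 2*lam*C₀^4 := by nlinarith [sq_nonneg (a*y)]
  have hax : a^2*x^2 ≤ (2*lam*C₀^6)*C₀^2 := mul_le_mul ha2 hx2 (sq_nonneg x) (by positivity)
  have hb2 : b^2 ≤ 16 * C₀^8 * lam := by
    nlinarith [sq_nonneg ((a*x+b)+a*x), mul_nonneg hlam.le (sub_nonneg.mpr hC4),
      mul_nonneg hlam.le (sub_nonneg.mpr hC2)]
  -- conclude
  have hM0 : 0 ≤ 4 * C₀^4 * Real.sqrt lam := by positivity
  have hMsq : (4 * C₀^4 * Real.sqrt lam)^2 = 16 * C₀^8 * lam := by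
    rw [mul_pow, mul_pow, Real.sq_sqrt hlam.le]; ring
  refine ⟨?_, ?_, ?_, ?_⟩ <;> refine abs_le_of_sq_le_sq_aux _ _ hM0 ?_ <;> rw [hMsq]
  · exact ha2'
  · exact hb2
  · exact hc2'
  · exact hd2
end

section
/- Let F be a real quadratic field with real embeddings σ₁, σ₂ and ring of integers O_F. Let A, B ≥ 1 be real numbers and let α₁, α₂, Δ₁, Δ₂ ∈ O_F be totally positive elements satisfying |σⱼ(αᵢ)| ≤ A and |σⱼ(Δᵢ)| ≤ B for all i, j ∈ {1, 2}. If α₂²Δ₁ ≠ α₁²Δ₂, then |√(σ₁(Δ₁))/(2σ₁(α₁)) − √(σ₁(Δ₂))/(2σ₁(α₂))| ≥ 1/(8A⁵B^{3/2}). -/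
open NumberField

/-- Norm of an element of a real quadratic field as product of the two real embeddings. -/
lemma norm_eq_mul_embeddings (F : Type*) [Field F] [NumberField F]
    (hdeg : Module.finrank ℚ F = 2)
    (σ₁ σ₂ : F →+* ℝ) (hσ : σ₁ ≠ σ₂) (x : F) :
    ((Algebra.norm ℚ x : ℚ) : ℝ) = σ₁ x * σ₂ x := by
  classical
  set τ₁ : F →+* ℂ := Complex.ofRealHom.comp σ₁ with hτ₁
  set τ₂ : F →+* ℂ := Complex.ofRealHom.comp σ₂ with hτ₂
  have hτ : τ₁ ≠ τ₂ := by
    intro h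
    apply hσ
    ext y
    have := RingHom.congr_fun h y
    simpa [hτ₁, hτ₂, Complex.ofReal_inj] using this
  have hcard : Fintype.card (F →+* ℂ) = 2 := by
    rw [NumberField.Embeddings.card F ℂ, hdeg]
  have huniv : (Finset.univ : Finset (F →+* ℂ)) = {τ₁, τ₂} := by
    symm
    apply Finset.eq_univ_of_card
    rw [Finset.card_insert_of_notMem (by simpa using hτ), Finset.card_singleton, hcard]
  have hprod : (algebraMap ℚ ℂ) (Algebra.norm ℚ x) = τ₁ x * τ₂ x := by
    rw [Algebra.norm_eq_prod_embeddings]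
    rw [← Fintype.prod_equiv (RingHom.equivRatAlgHom F ℂ) (fun φ => φ x) (fun ψ => ψ x)
      (fun φ => rfl)]
    rw [huniv, Finset.prod_insert (by simpa using hτ), Finset.prod_singleton]
  have : ((Algebra.norm ℚ x : ℚ) : ℂ) = ((σ₁ x * σ₂ x : ℝ) : ℂ) := by
    rw [← Complex.ofReal_ratCast]
    push_cast
    simpa [hτ₁, hτ₂] using hprod
  exact_mod_cast this

set_option maxHeartbeats 1000000 in
/-- **Quantitative separation of imaginary parts of CM points (from Lemma 3.1.5).**
Let `F` be a real quadratic field with embeddings `σ₁, σ₂`, and let `α₁, α₂, Δ₁, Δ₂` be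
totally positive algebraic integers with `|σⱼ(αᵢ)| ≤ A` and `|σⱼ(Δᵢ)| ≤ B`.  If
`α₂²Δ₁ ≠ α₁²Δ₂` then `|√(σ₁Δ₁)/(2σ₁α₁) − √(σ₁Δ₂)/(2σ₁α₂)| ≥ 1/(8A⁵B^{3/2})`. -/
theorem cm_point_separation
    (F : Type*) [Field F] [NumberField F]
    (hdeg : Module.finrank ℚ F = 2)
    (σ₁ σ₂ : F →+* ℝ) (hσ : σ₁ ≠ σ₂)
    (A B : ℝ) (hA : 1 ≤ A) (hB : 1 ≤ B)
    (α₁ α₂ Δ₁ Δ₂ : 𝓞 F)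
    (hα₁pos : 0 < σ₁ (algebraMap (𝓞 F) F α₁) ∧ 0 < σ₂ (algebraMap (𝓞 F) F α₁))
    (hα₂pos : 0 < σ₁ (algebraMap (𝓞 F) F α₂) ∧ 0 < σ₂ (algebraMap (𝓞 F) F α₂))
    (hΔ₁pos : 0 < σ₁ (algebraMap (𝓞 F) F Δ₁) ∧ 0 < σ₂ (algebraMap (𝓞 F) F Δ₁))
    (hΔ₂pos : 0 < σ₁ (algebraMap (𝓞 F) F Δ₂) ∧ 0 < σ₂ (algebraMap (𝓞 F) F Δ₂))
    (hα₁bd : |σ₁ (algebraMap (𝓞 F) F α₁)| ≤ A ∧ |σ₂ (algebraMap (𝓞 F) F α₁)| ≤ A)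
    (hα₂bd : |σ₁ (algebraMap (𝓞 F) F α₂)| ≤ A ∧ |σ₂ (algebraMap (𝓞 F) F α₂)| ≤ A)
    (hΔ₁bd : |σ₁ (algebraMap (𝓞 F) F Δ₁)| ≤ B ∧ |σ₂ (algebraMap (𝓞 F) F Δ₁)| ≤ B)
    (hΔ₂bd : |σ₁ (algebraMap (𝓞 F) F Δ₂)| ≤ B ∧ |σ₂ (algebraMap (𝓞 F) F Δ₂)| ≤ B)
    (hne : α₂ ^ 2 * Δ₁ ≠ α₁ ^ 2 * Δ₂) :
    1 / (8 * A ^ 5 * B ^ ((3 : ℝ) / 2)) ≤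
      |Real.sqrt (σ₁ (algebraMap (𝓞 F) F Δ₁)) / (2 * σ₁ (algebraMap (𝓞 F) F α₁)) -
        Real.sqrt (σ₁ (algebraMap (𝓞 F) F Δ₂)) / (2 * σ₁ (algebraMap (𝓞 F) F α₂))| := by
  obtain ⟨ha₁, hb₁⟩ := hα₁pos
  obtain ⟨ha₂, hb₂⟩ := hα₂pos
  obtain ⟨hd₁, he₁⟩ := hΔ₁pos
  obtain ⟨hd₂, he₂⟩ := hΔ₂pos
  set a₁ := σ₁ (algebraMap (𝓞 F) F α₁)
  set a₂ := σ₁ (algebraMap (𝓞 F) F α₂)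
  set b₁ := σ₂ (algebraMap (𝓞 F) F α₁)
  set b₂ := σ₂ (algebraMap (𝓞 F) F α₂)
  set d₁ := σ₁ (algebraMap (𝓞 F) F Δ₁)
  set d₂ := σ₁ (algebraMap (𝓞 F) F Δ₂)
  set e₁ := σ₂ (algebraMap (𝓞 F) F Δ₁)
  set e₂ := σ₂ (algebraMap (𝓞 F) F Δ₂)
  set s₁ := Real.sqrt d₁ with hs₁def
  set s₂ := Real.sqrt d₂ with hs₂def
  have hs₁ : s₁ ^ 2 = d₁ := Real.sq_sqrt hd₁.le
  have hs₂ : s₂ ^ 2 = d₂ := Real.sq_sqrt hd₂.le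
  have hs₁pos : 0 < s₁ := Real.sqrt_pos.mpr hd₁
  have hs₂pos : 0 < s₂ := Real.sqrt_pos.mpr hd₂
  have hA0 : (0:ℝ) < A := by linarith
  have hB0 : (0:ℝ) < B := by linarith
  -- bounds without abs
  have ha₁A : a₁ ≤ A := (abs_le.mp hα₁bd.1).2
  have ha₂A : a₂ ≤ A := (abs_le.mp hα₂bd.1).2
  have hb₁A : |b₁| ≤ A := hα₁bd.2
  have hb₂A : |b₂| ≤ A := hα₂bd.2
  have hd₁B : d₁ ≤ B := (abs_le.mp hΔ₁bd.1).2
  have hd₂B : d₂ ≤ B := (abs_le.mp hΔ₂bd.1).2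
  have he₁B : |e₁| ≤ B := hΔ₁bd.2
  have he₂B : |e₂| ≤ B := hΔ₂bd.2
  have hs₁B : s₁ ≤ Real.sqrt B := Real.sqrt_le_sqrt hd₁B
  have hs₂B : s₂ ≤ Real.sqrt B := Real.sqrt_le_sqrt hd₂B
  have hsB1 : 1 ≤ Real.sqrt B := by
    rw [show (1:ℝ) = Real.sqrt 1 by simp]
    exact Real.sqrt_le_sqrt hB
  -- the nonzero algebraic integer
  set γ : 𝓞 F := α₂ ^ 2 * Δ₁ - α₁ ^ 2 * Δ₂ with hγdef
  have hγ : γ ≠ 0 := sub_ne_zero.mpr hne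
  have hnorm1 : (1:ℝ) ≤ |σ₁ (algebraMap (𝓞 F) F γ) * σ₂ (algebraMap (𝓞 F) F γ)| := by
    rw [← norm_eq_mul_embeddings F hdeg σ₁ σ₂ hσ]
    have h1 : (1:ℚ) ≤ |Algebra.norm ℚ ((algebraMap (𝓞 F) F) γ)| := by
      rw [show (algebraMap (𝓞 F) F) γ = (γ : F) from rfl, ← Algebra.coe_norm_int,
        ← Int.cast_one, ← Int.cast_abs, Int.cast_le]
      exact Int.one_le_abs (Algebra.norm_ne_zero_iff.mpr hγ)
    calc (1:ℝ) = ((1:ℚ):ℝ) := by norm_num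
      _ ≤ |((Algebra.norm ℚ ((algebraMap (𝓞 F) F) γ) : ℚ) : ℝ)| := by
          rw [← Rat.cast_abs]; exact_mod_cast h1
  have hγ₁ : σ₁ (algebraMap (𝓞 F) F γ) = a₂ ^ 2 * d₁ - a₁ ^ 2 * d₂ := by
    simp [hγdef, map_sub, map_mul, map_pow, a₂, a₁, d₁, d₂]
  have hγ₂ : σ₂ (algebraMap (𝓞 F) F γ) = b₂ ^ 2 * e₁ - b₁ ^ 2 * e₂ := by
    simp [hγdef, map_sub, map_mul, map_pow, b₂, b₁, e₁, e₂]
  -- upper bound for the conjugate embedding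
  have hγ₂bd : |σ₂ (algebraMap (𝓞 F) F γ)| ≤ 2 * A ^ 2 * B := by
    rw [hγ₂]
    have h1 : |b₂ ^ 2 * e₁| ≤ A ^ 2 * B := by
      rw [abs_mul, abs_pow]
      exact mul_le_mul (pow_le_pow_left₀ (abs_nonneg _) hb₂A 2) he₁B (abs_nonneg _)
        (by positivity)
    have h2 : |b₁ ^ 2 * e₂| ≤ A ^ 2 * B := by
      rw [abs_mul, abs_pow]
      exact mul_le_mul (pow_le_pow_left₀ (abs_nonneg _) hb₁A 2) he₂B (abs_nonneg _)
        (by positivity)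
    calc |b₂ ^ 2 * e₁ - b₁ ^ 2 * e₂| ≤ |b₂ ^ 2 * e₁| + |b₁ ^ 2 * e₂| := abs_sub _ _
      _ ≤ 2 * A ^ 2 * B := by linarith
  -- lower bound for the first embedding
  have hγ₁low : 1 / (2 * A ^ 2 * B) ≤ |σ₁ (algebraMap (𝓞 F) F γ)| := by
    rw [div_le_iff₀ (by positivity)]
    calc (1:ℝ) ≤ |σ₁ (algebraMap (𝓞 F) F γ) * σ₂ (algebraMap (𝓞 F) F γ)| := hnorm1
      _ = |σ₁ (algebraMap (𝓞 F) F γ)| * |σ₂ (algebraMap (𝓞 F) F γ)| := abs_mul _ _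
      _ ≤ |σ₁ (algebraMap (𝓞 F) F γ)| * (2 * A ^ 2 * B) :=
          mul_le_mul_of_nonneg_left hγ₂bd (abs_nonneg _)
  -- factorisation identity
  set t : ℝ := s₁ / (2 * a₁) - s₂ / (2 * a₂) with htdef
  have hid : σ₁ (algebraMap (𝓞 F) F γ) = (2 * a₁ * a₂) * (a₂ * s₁ + a₁ * s₂) * t := by
    rw [hγ₁, ← hs₁, ← hs₂, htdef]
    field_simp
    ring
  have hsumpos : 0 < a₂ * s₁ + a₁ * s₂ := by positivity
  have habs : |σ₁ (algebraMap (𝓞 F) F γ)| = (2 * a₁ * a₂) * (a₂ * s₁ + a₁ * s₂) * |t| := by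
    rw [hid, abs_mul, abs_of_pos (by positivity : (0:ℝ) < 2 * a₁ * a₂ * (a₂ * s₁ + a₁ * s₂))]
  -- bound on the positive factor
  have hDle : (2 * a₁ * a₂) * (a₂ * s₁ + a₁ * s₂) ≤ 4 * A ^ 3 * Real.sqrt B := by
    have h1 : a₂ * s₁ ≤ A * Real.sqrt B := mul_le_mul ha₂A hs₁B hs₁pos.le hA0.le
    have h2 : a₁ * s₂ ≤ A * Real.sqrt B := mul_le_mul ha₁A hs₂B hs₂pos.le hA0.le
    have h3 : a₁ * a₂ ≤ A * A := mul_le_mul ha₁A ha₂A ha₂.le hA0.le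
    have h4 : (a₁ * a₂) * (a₂ * s₁ + a₁ * s₂) ≤ (A * A) * (2 * (A * Real.sqrt B)) :=
      mul_le_mul h3 (by linarith) hsumpos.le (by positivity)
    calc (2 * a₁ * a₂) * (a₂ * s₁ + a₁ * s₂)
        = 2 * ((a₁ * a₂) * (a₂ * s₁ + a₁ * s₂)) := by ring
      _ ≤ 2 * ((A * A) * (2 * (A * Real.sqrt B))) := by linarith
      _ = 4 * A ^ 3 * Real.sqrt B := by ring
  -- put everything together
  have hB32 : B ^ ((3:ℝ)/2) = B * Real.sqrt B := by
    rw [show ((3:ℝ)/2) = (1:ℝ) + 1/2 by norm_num, Real.rpow_add hB0, Real.rpow_one,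
      ← Real.sqrt_eq_rpow]
  rw [hB32]
  have key : 1 / (2 * A ^ 2 * B) ≤ (4 * A ^ 3 * Real.sqrt B) * |t| := by
    calc 1 / (2 * A ^ 2 * B) ≤ |σ₁ (algebraMap (𝓞 F) F γ)| := hγ₁low
      _ = (2 * a₁ * a₂) * (a₂ * s₁ + a₁ * s₂) * |t| := habs
      _ ≤ (4 * A ^ 3 * Real.sqrt B) * |t| :=
          mul_le_mul_of_nonneg_right hDle (abs_nonneg _)
  rw [div_le_iff₀ (by positivity)] at key ⊢
  calc (1:ℝ) ≤ (4 * A ^ 3 * Real.sqrt B) * |t| * (2 * A ^ 2 * B) := key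
    _ = |t| * (8 * A ^ 5 * (B * Real.sqrt B)) := by ring
end

section
/- Let ℓ be a prime and let Λ₀ be a finite free ℤ_ℓ-module. Let Λ₀ ⊇ Λ₁ ⊇ Λ₂ ⊇ … be a decreasing sequence of ℤ_ℓ-submodules with ⋂_{k≥0} Λ_k = 0. Suppose that for every k ≥ 1 and every β ∈ Λ_{k−1}, if ℓ·β ∈ Λ_{k+1} then β ∈ Λ_k. Then there exists k₀ ≥ 0 such that Λ_{k+1} ⊆ ℓ·Λ_k for all k ≥ k₀. -/
open Submodule Set

/-- Every submodule of a finite free module over `ℤ_[p]` (as a pi type) is closed. -/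
lemma padic_submodule_isClosed {p : ℕ} [Fact p.Prime] {ι : Type*} [Fintype ι]
    (N : Submodule ℤ_[p] (ι → ℤ_[p])) : IsClosed (N : Set (ι → ℤ_[p])) := by
  obtain ⟨s, hs⟩ := IsNoetherian.noetherian N
  have hr0 : Set.range (fun i : s => (i : ι → ℤ_[p])) = (↑s : Set (ι → ℤ_[p])) :=
    Subtype.range_coe
  have hrangeN : LinearMap.range
      (Fintype.linearCombination ℤ_[p] (fun i : s => (i : ι → ℤ_[p]))) = N := by
    rw [Fintype.range_linearCombination, hr0, hs]
  have hrange : (N : Set (ι → ℤ_[p])) =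
      Set.range (Fintype.linearCombination ℤ_[p] (fun i : s => (i : ι → ℤ_[p]))) := by
    rw [← hrangeN, LinearMap.coe_range]
  have hcont : Continuous (Fintype.linearCombination ℤ_[p]
      (fun i : s => (i : ι → ℤ_[p]))) := by
    have h2 : Continuous (fun c : s → ℤ_[p] => ∑ i, c i • (i : ι → ℤ_[p])) :=
      continuous_finset_sum _ fun i _ => (continuous_apply i).smul continuous_const
    exact h2.congr fun c => rfl
  rw [hrange, ← Set.image_univ]
  exact (isCompact_univ.image hcont).isClosed

/-- The core statement, for the concrete module `ι → ℤ_[ℓ]`. -/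
theorem ladic_decay_core (ℓ : ℕ) [Fact ℓ.Prime] {ι : Type*} [Fintype ι]
    (Λ : ℕ → Submodule ℤ_[ℓ] (ι → ℤ_[ℓ]))
    (htop : Λ 0 = ⊤)
    (hdec : ∀ k : ℕ, Λ (k + 1) ≤ Λ k)
    (hint : ⨅ k : ℕ, Λ k = ⊥)
    (hlift : ∀ k : ℕ, ∀ β ∈ Λ k, (ℓ : ℤ_[ℓ]) • β ∈ Λ (k + 2) → β ∈ Λ (k + 1)) :
    ∃ k₀ : ℕ, ∀ k : ℕ, k₀ ≤ k →
      ∀ x ∈ Λ (k + 1), ∃ y ∈ Λ k, x = (ℓ : ℤ_[ℓ]) • y := by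
  haveI : NeZero ℓ := ⟨(Fact.out : ℓ.Prime).ne_zero⟩
  have hant : Antitone Λ := antitone_nat_of_succ_le hdec
  -- Lifting lemma: if ℓ•u ∈ Λ (m+1) then u ∈ Λ m.
  have hL : ∀ m : ℕ, ∀ u, (ℓ : ℤ_[ℓ]) • u ∈ Λ (m + 1) → u ∈ Λ m := by
    intro m
    induction m with
    | zero => intro u _; rw [htop]; trivial
    | succ m ih => intro u hu; exact hlift m u (ih u (hdec _ hu)) hu
  -- Reduction mod ℓ, coordinatewise.
  set r : (ι → ℤ_[ℓ]) → (ι → ZMod ℓ) := fun z i => PadicInt.toZMod (z i) with hr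
  set Q : ℕ → Set (ι → ZMod ℓ) := fun j => r '' (Λ j) with hQ
  have hQant : ∀ j j' : ℕ, j ≤ j' → Q j' ⊆ Q j :=
    fun j j' h => Set.image_mono (hant h)
  -- The images mod ℓ stabilize.
  have hQfin : (Q '' Set.univ).Finite := Set.toFinite _
  obtain ⟨k₀, -, hmin⟩ := Set.Finite.exists_minimalFor' Q Set.univ hQfin
    ⟨0, Set.mem_univ 0⟩
  have hstab : ∀ j : ℕ, k₀ ≤ j → Q j = Q k₀ :=
    fun j hj => le_antisymm (hQant _ _ hj) (hmin (Set.mem_univ j) (hQant _ _ hj))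
  -- For m ≥ k₀, any x ∈ Λ m can be written w + ℓ•u with w ∈ Λ (m+1).
  have hred : ∀ m : ℕ, k₀ ≤ m → ∀ x ∈ Λ m, ∃ w ∈ Λ (m + 1), ∃ u, x = w + (ℓ : ℤ_[ℓ]) • u := by
    intro m hm x hx
    have hx' : r x ∈ Q (m + 1) := by
      rw [hstab (m + 1) (hm.trans (Nat.le_succ m)), ← hstab m hm]
      exact ⟨x, hx, rfl⟩
    obtain ⟨w, hw, hrw⟩ := hx'
    have hcoord : ∀ i, ∃ c : ℤ_[ℓ], x i - w i = c * (ℓ : ℤ_[ℓ]) := by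
      intro i
      have h0 : (x i - w i) ∈ RingHom.ker (PadicInt.toZMod (p := ℓ)) := by
        have := congrFun hrw i
        simp only [hr] at this
        simp [RingHom.mem_ker, map_sub, this]
      rw [PadicInt.ker_toZMod, PadicInt.maximalIdeal_eq_span_p,
        Ideal.mem_span_singleton] at h0
      obtain ⟨c, hc⟩ := h0
      exact ⟨c, by rw [hc]; ring⟩
    choose c hc using hcoord
    refine ⟨w, hw, c, funext fun i => ?_⟩
    have := hc i
    simp only [Pi.add_apply, Pi.smul_apply, smul_eq_mul]
    have : x i = w i + c i * (ℓ : ℤ_[ℓ]) := by linear_combination this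
    rw [this]; ring
  refine ⟨k₀, fun k hk x hx => ?_⟩
  -- iteration: x ∈ ℓ•Λ k + Λ (k+1+j) for every j
  have hiter : ∀ j : ℕ, ∃ y ∈ Λ k, ∃ w ∈ Λ (k + 1 + j), x = (ℓ : ℤ_[ℓ]) • y + w := by
    intro j
    induction j with
    | zero => exact ⟨0, zero_mem _, x, hx, by simp⟩
    | succ j ih =>
      obtain ⟨y, hy, w, hw, hxyw⟩ := ih
      obtain ⟨w', hw', u, hwu⟩ := hred (k + 1 + j) (hk.trans (by omega)) w hw
      have hu1 : (ℓ : ℤ_[ℓ]) • u ∈ Λ (k + 1) := by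
        have h1 : w ∈ Λ (k + 1) := hant (by omega) hw
        have h2 : w' ∈ Λ (k + 1) := hant (by omega) hw'
        have : (ℓ : ℤ_[ℓ]) • u = w - w' := by rw [hwu]; ring
        rw [this]; exact sub_mem h1 h2
      have hu : u ∈ Λ k := hL k u hu1
      exact ⟨y + u, add_mem hy hu, w', hw', by rw [hxyw, hwu, smul_add]; ring⟩
  -- the submodule ℓ • Λ k
  set N : Submodule ℤ_[ℓ] (ι → ℤ_[ℓ]) :=
    (Λ k).map ((ℓ : ℤ_[ℓ]) • (LinearMap.id : (ι → ℤ_[ℓ]) →ₗ[ℤ_[ℓ]] (ι → ℤ_[ℓ]))) with hN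
  have hmemN : ∀ z, z ∈ N ↔ ∃ y ∈ Λ k, z = (ℓ : ℤ_[ℓ]) • y := by
    intro z
    simp only [hN, Submodule.mem_map, LinearMap.smul_apply, LinearMap.id_apply]
    exact ⟨fun ⟨y, hy, h⟩ => ⟨y, hy, h.symm⟩, fun ⟨y, hy, h⟩ => ⟨y, hy, h.symm⟩⟩
  -- Cantor intersection of the closed nested sets
  set C : ℕ → Set (ι → ℤ_[ℓ]) :=
    fun j => (Λ (k + 1 + j) : Set (ι → ℤ_[ℓ])) ∩ {z | x - z ∈ N} with hC
  have hCclosed : ∀ j, IsClosed (C j) := by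
    intro j
    refine (padic_submodule_isClosed _).inter ?_
    have : {z | x - z ∈ N} = (fun z => x - z) ⁻¹' (N : Set (ι → ℤ_[ℓ])) := rfl
    rw [this]
    exact (padic_submodule_isClosed N).preimage (continuous_const.sub continuous_id)
  have hCnested : ∀ j, C (j + 1) ⊆ C j := by
    intro j
    exact Set.inter_subset_inter_left _ (hant (by omega))
  have hCne : ∀ j, (C j).Nonempty := by
    intro j
    obtain ⟨y, hy, w, hw, hxyw⟩ := hiter j
    refine ⟨w, hw, ?_⟩
    show x - w ∈ N
    rw [hmemN]
    exact ⟨y, hy, by rw [hxyw]; ring⟩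
  obtain ⟨w, hw⟩ := IsCompact.nonempty_iInter_of_sequence_nonempty_isCompact_isClosed C
    hCnested hCne ((hCclosed 0).isCompact) hCclosed
  simp only [Set.mem_iInter] at hw
  have hw0 : w = 0 := by
    have : w ∈ ⨅ m : ℕ, Λ m := by
      rw [Submodule.mem_iInf]
      intro m
      exact hant (by omega : m ≤ k + 1 + m) (hw m).1
    rw [hint, Submodule.mem_bot] at this
    exact this
  have : x - w ∈ N := (hw 0).2
  rw [hw0, sub_zero, hmemN] at this
  obtain ⟨y, hy, h⟩ := this
  exact ⟨y, hy, h⟩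

/-- **ℓ-adic decay of a filtered family of submodules (from Theorem 4.1.1).**
Let `Λ₀ ⊇ Λ₁ ⊇ Λ₂ ⊇ …` be a decreasing chain of `ℤ_ℓ`-submodules of a finite free
`ℤ_ℓ`-module with trivial intersection, such that for every `k ≥ 1` and `β ∈ Λ_{k−1}`,
if `ℓ·β ∈ Λ_{k+1}` then `β ∈ Λ_k`.  Then `Λ_{k+1} ⊆ ℓ·Λ_k` for all large `k`. -/
theorem ladic_decay_of_special_endomorphisms
    (ℓ : ℕ) [Fact ℓ.Prime]
    (V : Type*) [AddCommGroup V] [Module ℤ_[ℓ] V]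
    [Module.Free ℤ_[ℓ] V] [Module.Finite ℤ_[ℓ] V]
    (Λ : ℕ → Submodule ℤ_[ℓ] V)
    (htop : Λ 0 = ⊤)
    (hdec : ∀ k : ℕ, Λ (k + 1) ≤ Λ k)
    (hint : ⨅ k : ℕ, Λ k = ⊥)
    (hlift : ∀ k : ℕ, ∀ β ∈ Λ k, (ℓ : ℤ_[ℓ]) • β ∈ Λ (k + 2) → β ∈ Λ (k + 1)) :
    ∃ k₀ : ℕ, ∀ k : ℕ, k₀ ≤ k →
      ∀ x ∈ Λ (k + 1), ∃ y ∈ Λ k, x = (ℓ : ℤ_[ℓ]) • y := by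
  let b := Module.Free.chooseBasis ℤ_[ℓ] V
  let e : V ≃ₗ[ℤ_[ℓ]] (Module.Free.ChooseBasisIndex ℤ_[ℓ] V → ℤ_[ℓ]) := b.equivFun
  set Λ' : ℕ → Submodule ℤ_[ℓ] (Module.Free.ChooseBasisIndex ℤ_[ℓ] V → ℤ_[ℓ]) :=
    fun j => (Λ j).map e.toLinearMap with hΛ'
  have hmem : ∀ (j : ℕ) (z), z ∈ Λ' j ↔ e.symm z ∈ Λ j := by
    intro j z
    rw [hΛ', Submodule.mem_map]
    constructor
    · rintro ⟨y, hy, rfl⟩; simpa using hy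
    · intro h; exact ⟨e.symm z, h, by simp⟩
  have htop' : Λ' 0 = ⊤ := by
    rw [eq_top_iff]; intro z _
    rw [hmem]; rw [htop]; trivial
  have hdec' : ∀ j : ℕ, Λ' (j + 1) ≤ Λ' j := by
    intro j z hz
    rw [hmem] at hz ⊢
    exact hdec j hz
  have hint' : ⨅ j : ℕ, Λ' j = ⊥ := by
    rw [eq_bot_iff]
    intro z hz
    rw [Submodule.mem_iInf] at hz
    have : e.symm z ∈ ⨅ j : ℕ, Λ j := by
      rw [Submodule.mem_iInf]; intro j; rw [← hmem]; exact hz j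
    rw [hint, Submodule.mem_bot] at this
    rw [Submodule.mem_bot]
    have := congrArg e this
    simpa using this
  have hlift' : ∀ j : ℕ, ∀ β ∈ Λ' j, (ℓ : ℤ_[ℓ]) • β ∈ Λ' (j + 2) → β ∈ Λ' (j + 1) := by
    intro j β hβ hsm
    rw [hmem] at hβ hsm ⊢
    rw [map_smul] at hsm
    exact hlift j _ hβ hsm
  obtain ⟨k₀, hk₀⟩ := ladic_decay_core ℓ Λ' htop' hdec' hint' hlift'
  refine ⟨k₀, fun k hk x hx => ?_⟩
  have hx' : e x ∈ Λ' (k + 1) := by rw [hmem]; simpa using hx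
  obtain ⟨y', hy', hxy'⟩ := hk₀ k hk (e x) hx'
  refine ⟨e.symm y', (hmem k y').mp hy', ?_⟩
  have := congrArg e.symm hxy'
  simpa [map_smul] using this
end

section
/- Let M be a free ℤ-module of finite rank equipped with a positive definite quadratic form Q taking integer values, with associated ℤ-valued bilinear form ⟨x, y⟩ = Q(x+y) − Q(x) − Q(y). Let P ⊆ M be a submodule of rank 2 and let P' = { x ∈ M : ⟨x, p⟩ = 0 for all p ∈ P }. Let D_M denote the determinant of the Gram matrix (⟨eᵢ, eⱼ⟩) of a ℤ-basis of M, and D_P the Gram determinant of a ℤ-basis of P. Then D_M·D_P²·x ∈ P + P' for every x ∈ M. -/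
section Aux

variable {M : Type*} [AddCommGroup M] [Module ℤ M]

lemma polar_sum_right' (Q : QuadraticForm ℤ M) (a : M) {ι : Type*} (s : Finset ι)
    (f : ι → M) :
    QuadraticMap.polar (⇑Q) a (∑ i ∈ s, f i) = ∑ i ∈ s, QuadraticMap.polar (⇑Q) a (f i) := by
  have h := map_sum (Q.polarBilin a) f s
  simp only [QuadraticMap.polarBilin_apply_apply] at h
  exact h

lemma polar_zsmul_right' (Q : QuadraticForm ℤ M) (a : M) (n : ℤ) (y : M) :
    QuadraticMap.polar (⇑Q) a (n • y) = n * QuadraticMap.polar (⇑Q) a y := by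
  have h := map_zsmul (Q.polarBilin a) n y
  simp only [QuadraticMap.polarBilin_apply_apply, smul_eq_mul] at h
  exact h

lemma polar_zsmul_left' (Q : QuadraticForm ℤ M) (a : M) (n : ℤ) (y : M) :
    QuadraticMap.polar (⇑Q) (n • y) a = n * QuadraticMap.polar (⇑Q) y a := by
  rw [QuadraticMap.polar_comm, polar_zsmul_right', QuadraticMap.polar_comm]

end Aux

/-- **The inclusion `D_M·D_P²·M ⊆ P + P'` (from Lemma 4.3.4).**
Let `M` be a free `ℤ`-module of finite rank with a positive definite integer-valued
quadratic form `Q` and associated bilinear form `⟨x, y⟩ = Q(x+y) − Q(x) − Q(y)`, let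
`P ⊆ M` be a rank-2 submodule, and let `P'` be the orthogonal complement of `P` in `M`.
If `D_M` and `D_P` are the Gram determinants of `M` and `P`, then
`D_M·D_P²·x ∈ P + P'` for every `x ∈ M`. -/
theorem scaled_module_in_sublattice_sum
    (n : ℕ) (M : Type*) [AddCommGroup M] [Module ℤ M]
    (Q : QuadraticForm ℤ M) (hQ : Q.PosDef)
    (bM : Module.Basis (Fin n) ℤ M)
    (P : Submodule ℤ M) (bP : Module.Basis (Fin 2) ℤ P)
    (DM DP : ℤ)
    (hDM : DM = Matrix.det (Matrix.of fun i j : Fin n =>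
      QuadraticMap.polar (⇑Q) (bM i) (bM j)))
    (hDP : DP = Matrix.det (Matrix.of fun i j : Fin 2 =>
      QuadraticMap.polar (⇑Q) ((bP i : P) : M) ((bP j : P) : M))) :
    ∀ x : M, ∃ u ∈ P, ∃ w : M,
      (∀ p ∈ P, QuadraticMap.polar (⇑Q) w p = 0) ∧
      (DM * DP ^ 2) • x = u + w := by
  intro x
  classical
  set G : Matrix (Fin 2) (Fin 2) ℤ :=
    Matrix.of fun i j : Fin 2 =>
      QuadraticMap.polar (⇑Q) ((bP i : P) : M) ((bP j : P) : M) with hG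
  set v : Fin 2 → ℤ := fun i => QuadraticMap.polar (⇑Q) ((bP i : P) : M) x with hv
  set c : Fin 2 → ℤ := G.adjugate.mulVec v with hc
  set u0 : M := ∑ i, c i • ((bP i : P) : M) with hu0
  set w0 : M := DP • x - u0 with hw0
  have hu0P : u0 ∈ P := by
    refine Submodule.sum_mem _ fun i _ => ?_
    exact P.toAddSubgroup.zsmul_mem (bP i).2 _
  -- orthogonality of w0 against basis vectors of P
  have key : ∀ j : Fin 2, QuadraticMap.polar (⇑Q) ((bP j : P) : M) w0 = 0 := by
    intro j
    have h1 : QuadraticMap.polar (⇑Q) ((bP j : P) : M) u0 = (G.mulVec c) j := by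
      rw [hu0, polar_sum_right']
      simp only [polar_zsmul_right']
      simp [Matrix.mulVec, dotProduct, hG, mul_comm]
    have h2 : G.mulVec c = DP • v := by
      rw [hc, Matrix.mulVec_mulVec, Matrix.mul_adjugate, hDP]
      simp [Matrix.smul_mulVec, Matrix.one_mulVec]
    rw [hw0, QuadraticMap.polar_sub_right, polar_zsmul_right', h1, h2]
    simp [hv]
  have keyP : ∀ p ∈ P, QuadraticMap.polar (⇑Q) w0 p = 0 := by
    intro p hp
    have hrepr : (⟨p, hp⟩ : P) = ∑ i, bP.repr ⟨p, hp⟩ i • bP i := (bP.sum_repr ⟨p, hp⟩).symm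
    have hp' : p = ∑ i, bP.repr ⟨p, hp⟩ i • ((bP i : P) : M) := by
      have := congrArg (P.subtype) hrepr
      simp only [map_sum, map_smul, Submodule.subtype_apply] at this
      exact this
    rw [hp', polar_sum_right']
    refine Finset.sum_eq_zero fun i _ => ?_
    rw [polar_zsmul_right', QuadraticMap.polar_comm, key i, mul_zero]
  refine ⟨(DM * DP) • u0, P.toAddSubgroup.zsmul_mem hu0P _, (DM * DP) • w0, ?_, ?_⟩
  · intro p hp
    rw [polar_zsmul_left', keyP p hp, mul_zero]
  · have h3 : u0 + w0 = DP • x := by rw [hw0]; abel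
    simp only [← Int.cast_smul_eq_zsmul ℤ, Int.cast_id]
    rw [← smul_add, h3]
    simp only [← Int.cast_smul_eq_zsmul ℤ, Int.cast_id]
    rw [show DM * DP ^ 2 = (DM * DP) * DP by ring]
    convert (smul_smul (DM * DP) DP x).symm
    all_goals exact congrArg SMul.mk (funext fun k => funext fun y => int_smul_eq_zsmul _ k y)
end

section
/- Let M be a free ℤ-module of finite rank equipped with a positive definite quadratic form Q taking integer values, with associated ℤ-valued bilinear form ⟨x, y⟩ = Q(x+y) − Q(x) − Q(y). Let P ⊆ M be a saturated submodule of rank 2 (i.e., P = M ∩ (P ⊗ ℚ) inside M ⊗ ℚ), let D_M be the Gram determinant of M and D_P the Gram determinant of P, and set C = D_M·D_P². Let ℓ be a prime and k, N positive integers with ℓ^{2k} > C²·N. Then every element v ∈ M of the form v = u + ℓᵏ·w with u ∈ P and w ∈ M that satisfies Q(v) ≤ N lies in P. -/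
lemma gram_det_ne_zero {ι : Type*} [Fintype ι] [DecidableEq ι] {M : Type*} [AddCommGroup M]
    [Module ℤ M] (Q : QuadraticForm ℤ M) (hQ : Q.PosDef) (e : ι → M)
    (he : LinearIndependent ℤ e) :
    (Matrix.of fun i j => QuadraticMap.polar (⇑Q) (e i) (e j)).det ≠ 0 := by
  intro h
  obtain ⟨c, hc0, hmc⟩ := (Matrix.exists_mulVec_eq_zero_iff).2 h
  set x : M := ∑ j, c j • e j with hx
  have hxne : x ≠ 0 := by
    intro h0
    rw [hx] at h0
    simp only [← Int.cast_smul_eq_zsmul ℤ, Int.cast_id] at h0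
    exact hc0 (funext fun i => Fintype.linearIndependent_iff.1 he c h0 i)
  have hrow : ∀ z : M, Q.polarBilin z x = ∑ j, c j * Q.polarBilin z (e j) := by
    intro z
    rw [hx, map_sum]
    exact Finset.sum_congr rfl fun j _ => by
      rw [map_zsmul, zsmul_eq_mul, Int.cast_id]
  have hrow0 : ∀ i, Q.polarBilin (e i) x = 0 := by
    intro i
    have h1 := congrFun hmc i
    simp only [Matrix.mulVec, dotProduct, Matrix.of_apply, Pi.zero_apply] at h1
    rw [hrow, ← h1]
    exact Finset.sum_congr rfl fun j _ => mul_comm _ _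
  have hxx : Q.polarBilin x x = 0 := by
    rw [hrow x]
    exact Finset.sum_eq_zero fun j _ => by
      rw [show Q.polarBilin x (e j) = Q.polarBilin (e j) x from
        QuadraticMap.polar_comm (⇑Q) x (e j), hrow0 j, mul_zero]
  have h2 : QuadraticMap.polar (⇑Q) x x = 2 * Q x := by
    rw [QuadraticMap.polar_self]; ring
  rw [QuadraticMap.polarBilin_apply_apply] at hxx
  have := hQ x hxne
  omega

lemma aux_li {M : Type*} [AddCommGroup M] [Module ℤ M] (P : Submodule ℤ M)
    [instP : Module ℤ ↥P] (bP : Module.Basis (Fin 2) ℤ ↥P) :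
    LinearIndependent ℤ (fun i : Fin 2 => ((bP i : P) : M)) := by
  letI : Unique (Module ℤ ↥P) := AddCommGroup.uniqueIntModule
  have h : instP = P.module := Subsingleton.elim _ _
  subst h
  letI : Module ℤ ↥P := P.module
  have h2 : LinearIndependent ℤ (⇑P.subtype ∘ ⇑bP) :=
    bP.linearIndependent.map' P.subtype (Submodule.ker_subtype P)
  exact h2

set_option maxHeartbeats 4000000 in

/-- **Short vectors lie in the distinguished rank-2 sublattice (Lemma 4.3.4).**
Let `M` be a free `ℤ`-module of finite rank with a positive definite integer-valued
quadratic form `Q`, let `P ⊆ M` be a saturated rank-2 submodule, and set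
`C = D_M·D_P²` with `D_M, D_P` the Gram determinants of `M` and `P`.  If `ℓ` is a prime
and `k, N` are positive integers with `ℓ^{2k} > C²·N`, then every `v = u + ℓᵏ·w`
(`u ∈ P`, `w ∈ M`) with `Q(v) ≤ N` lies in `P`. -/
theorem short_vectors_in_sublattice
    (n : ℕ) (M : Type*) [AddCommGroup M] [Module ℤ M]
    (Q : QuadraticForm ℤ M) (hQ : Q.PosDef)
    (bM : Module.Basis (Fin n) ℤ M)
    (P : Submodule ℤ M) (bP : Module.Basis (Fin 2) ℤ P)
    (hsat : ∀ (c : ℤ) (x : M), c ≠ 0 → c • x ∈ P → x ∈ P)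
    (DM DP C : ℤ)
    (hDM : DM = Matrix.det (Matrix.of fun i j : Fin n =>
      QuadraticMap.polar (⇑Q) (bM i) (bM j)))
    (hDP : DP = Matrix.det (Matrix.of fun i j : Fin 2 =>
      QuadraticMap.polar (⇑Q) ((bP i : P) : M) ((bP j : P) : M)))
    (hC : C = DM * DP ^ 2)
    (ℓ : ℕ) (hℓ : ℓ.Prime) (k N : ℕ) (hk : 0 < k) (hN : 0 < N)
    (hbig : (C : ℤ) ^ 2 * N < (ℓ : ℤ) ^ (2 * k)) :
    ∀ v u w : M, u ∈ P → v = u + ((ℓ : ℤ) ^ k) • w → Q v ≤ N → v ∈ P := by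
  intro v u w hu hv hQv
  classical
  -- nonzero Gram determinants
  have hDM0 : DM ≠ 0 := by
    rw [hDM]; exact gram_det_ne_zero Q hQ _ bM.linearIndependent
  have hli : LinearIndependent ℤ (fun i : Fin 2 => ((bP i : P) : M)) := aux_li P bP
  have hDP0 : DP ≠ 0 := by
    rw [hDP]; exact gram_det_ne_zero Q hQ _ hli
  set L : ℤ := (ℓ : ℤ) ^ k with hL
  set e1 : M := ((bP 0 : P) : M) with he1
  set e2 : M := ((bP 1 : P) : M) with he2
  have he1P : e1 ∈ P := SetLike.coe_mem (bP 0)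
  have he2P : e2 ∈ P := SetLike.coe_mem (bP 1)
  have hcomm : ∀ x y : M, Q.polarBilin x y = Q.polarBilin y x := fun x y =>
    QuadraticMap.polar_comm (⇑Q) x y
  have hdet2 : DP = Q.polarBilin e1 e1 * Q.polarBilin e2 e2
      - Q.polarBilin e1 e2 * Q.polarBilin e2 e1 := by
    rw [hDP, Matrix.det_fin_two]
    rfl
  set a : M → ℤ := fun z => Q.polarBilin e2 e2 * Q.polarBilin e1 z
      - Q.polarBilin e1 e2 * Q.polarBilin e2 z with ha
  set b : M → ℤ := fun z => Q.polarBilin e1 e1 * Q.polarBilin e2 z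
      - Q.polarBilin e1 e2 * Q.polarBilin e1 z with hb
  set X : M → M := fun z => DP • z - (a z) • e1 - (b z) • e2 with hX
  -- second-argument expansion of X
  have hexp : ∀ z1 z : M, Q.polarBilin z1 (X z) = DP * Q.polarBilin z1 z
      - a z * Q.polarBilin z1 e1 - b z * Q.polarBilin z1 e2 := by
    intro z1 z
    simp only [hX, map_sub, map_zsmul, zsmul_eq_mul, Int.cast_id]
  -- orthogonality of X z to e1, e2
  have horth1 : ∀ z : M, Q.polarBilin e1 (X z) = 0 := by
    intro z
    rw [hexp e1 z]
    simp only [ha, hb]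
    rw [hdet2, hcomm e2 e1]
    ring
  have horth2 : ∀ z : M, Q.polarBilin e2 (X z) = 0 := by
    intro z
    rw [hexp e2 z]
    simp only [ha, hb]
    rw [hdet2, hcomm e2 e1]
    ring
  -- X u is orthogonal to all of P
  have hPorth : ∀ p : P, Q.polarBilin (X u) ((p : P) : M) = 0 := by
    intro p
    have hrep := bP.sum_repr p
    rw [Fin.sum_univ_two] at hrep
    have hp : ((p : P) : M) = bP.repr p 0 • e1 + bP.repr p 1 • e2 := by
      conv_lhs => rw [← hrep]
      simp [he1, he2]
    rw [hp, map_add, map_zsmul, map_zsmul,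
      hcomm (X u) e1, horth1 u, hcomm (X u) e2, horth2 u]
    simp
  have hXuP : X u ∈ P := by
    simp only [hX]
    exact sub_mem (sub_mem (zsmul_mem hu DP) (zsmul_mem he1P (a u))) (zsmul_mem he2P (b u))
  have hXu : X u = 0 := by
    by_contra hne
    have h1 := hQ _ hne
    have h2 : Q.polarBilin (X u) (X u) = 2 * Q (X u) := by
      rw [QuadraticMap.polarBilin_apply_apply, QuadraticMap.polar_self]; ring
    have h3 : Q.polarBilin (X u) (X u) = 0 := hPorth ⟨X u, hXuP⟩
    rw [h2] at h3
    omega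
  -- X v = X u + L • X w
  have hXadd : X v = X u + L • X w := by
    simp only [hX, ha, hb, hv, map_add, map_zsmul, zsmul_eq_mul, Int.cast_id]
    simp only [← Int.cast_smul_eq_zsmul ℤ, Int.cast_id]
    module
  rcases eq_or_ne (X w) 0 with hXw | hXw
  · -- X v = 0, so DP • v ∈ P and saturation applies
    have hXv0 : X v = 0 := by rw [hXadd, hXu, hXw, zero_add]; exact zsmul_zero L
    have h6 : DP • v - (a v • e1 + b v • e2) = 0 := by
      rw [← sub_sub]
      simpa only [hX] using hXv0
    have h5 : DP • v = a v • e1 + b v • e2 := sub_eq_zero.mp h6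
    have h7 : DP • v ∈ P := by
      rw [h5]; exact add_mem (zsmul_mem he1P _) (zsmul_mem he2P _)
    exact hsat DP v hDP0 h7
  · exfalso
    have hQXw : (1 : ℤ) ≤ Q (X w) := hQ _ hXw
    have hLL : L * L = (ℓ : ℤ) ^ (2 * k) := by rw [hL, ← pow_add, two_mul]
    have hQXv : Q (X v) = L * L * Q (X w) := by
      rw [hXadd, hXu, zero_add, ← Int.cast_smul_eq_zsmul ℤ L (X w), Int.cast_id,
        QuadraticMap.map_smul, smul_eq_mul]
    have hQXv2 : Q (X v) = (ℓ : ℤ) ^ (2 * k) * Q (X w) := by rw [hQXv, hLL]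
    set A : ℤ := Q.polarBilin (X v) (X v) with hA
    set β : ℤ := Q.polarBilin (X v) v with hβ
    set V : ℤ := Q.polarBilin v v with hV
    have hA2 : A = 2 * Q (X v) := by
      rw [hA, QuadraticMap.polarBilin_apply_apply, QuadraticMap.polar_self]; ring
    have hV2 : V = 2 * Q v := by
      rw [hV, QuadraticMap.polarBilin_apply_apply, QuadraticMap.polar_self]; ring
    have hAβ : A = DP * β := by
      rw [hA, hβ, hexp (X v) v, hcomm (X v) e1, horth1 v, hcomm (X v) e2, horth2 v]
      ring
    set z0 : M := A • v - β • X v with hz0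
    have hsecond : ∀ y : M, Q.polarBilin y z0 = A * Q.polarBilin y v
        - β * Q.polarBilin y (X v) := by
      intro y
      rw [hz0]
      simp only [map_sub, map_zsmul, zsmul_eq_mul, Int.cast_id]
    have hT : Q.polarBilin z0 z0 = A * (A * V - β * β) := by
      rw [hsecond z0, hcomm z0 v, hsecond v, hcomm z0 (X v), hsecond (X v),
        hcomm v (X v), ← hV, ← hβ, ← hA]
      ring
    have hz0nn : (0 : ℤ) ≤ Q z0 := by
      rcases eq_or_ne z0 0 with h | h
      · rw [h, map_zero]
      · exact le_of_lt (hQ _ h)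
    have hps : Q.polarBilin z0 z0 = 2 * Q z0 := by
      rw [QuadraticMap.polarBilin_apply_apply, QuadraticMap.polar_self]; ring
    have hcs : 0 ≤ A * (A * V - β * β) := by
      rw [← hT, hps]; linarith
    -- positivity facts
    have hℓpos : (0 : ℤ) < (ℓ : ℤ) := by exact_mod_cast hℓ.pos
    have hP2k : (0 : ℤ) < (ℓ : ℤ) ^ (2 * k) := pow_pos hℓpos _
    have hApos : 0 < A := by
      rw [hA2, hQXv2]; nlinarith
    have hβV : β * β ≤ A * V := by nlinarith
    have hAle : A ≤ DP ^ 2 * V := by nlinarith [sq_nonneg DP, mul_le_mul_of_nonneg_left hβV (sq_nonneg DP)]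
    have hQv0 : (0 : ℤ) ≤ Q v := by
      rcases eq_or_ne v 0 with h | h
      · rw [h, map_zero]
      · exact le_of_lt (hQ _ h)
    have hNZ : (0 : ℤ) < (N : ℤ) := by exact_mod_cast hN
    have hDM2 : (1 : ℤ) ≤ DM ^ 2 := by
      have h0 : (0 : ℤ) < DM ^ 2 := lt_of_le_of_ne (sq_nonneg DM) (Ne.symm (pow_ne_zero 2 hDM0))
      linarith
    have hDP2 : (1 : ℤ) ≤ DP ^ 2 := by
      have h0 : (0 : ℤ) < DP ^ 2 := lt_of_le_of_ne (sq_nonneg DP) (Ne.symm (pow_ne_zero 2 hDP0))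
      linarith
    -- chain of inequalities
    have h1 : 2 * (ℓ : ℤ) ^ (2 * k) ≤ A := by
      rw [hA2, hQXv2]; nlinarith
    have h2 : A ≤ 2 * DP ^ 2 * (N : ℤ) := by nlinarith
    have h3 : DP ^ 2 * (N : ℤ) ≤ C ^ 2 * N := by
      have key : (1 : ℤ) ≤ DM ^ 2 * DP ^ 2 :=
        le_trans hDM2 (le_mul_of_one_le_right (sq_nonneg DM) hDP2)
      calc DP ^ 2 * (N : ℤ) = 1 * (DP ^ 2 * N) := by ring
        _ ≤ (DM ^ 2 * DP ^ 2) * (DP ^ 2 * N) :=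
            mul_le_mul_of_nonneg_right key (by positivity)
        _ = C ^ 2 * N := by rw [hC]; ring
    linarith
end
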